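/- Let A be a finite-dimensional involutory Hopf algebra over ℂ. Then the trace character χ is a right integral on the dual Hopf algebra: for every a ∈ A, ∑ a₍₁₎ · χ(a₍₂₎) = χ(a) · 1, i.e., (id ⊗ χ) ∘ Δ = χ(·)·1 as maps A → A. -/

import Mathlib

/-!
STATEMENT 2: For a finite-dimensional involutory Hopf algebra A over ℂ, the trace character
χ is a right integral on the dual Hopf algebra: for every a ∈ A,
∑ a₍₁₎ · χ(a₍₂₎) = χ(a) · 1, i.e. (id ⊗ χ) ∘ Δ = χ(·)·1.
-/

open HopfAlgebra TensorProduct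

/-- The trace character of the left regular representation:
`χ(a)` is the trace of the ℂ-linear map `x ↦ a * x`. -/
noncomputable def traceChar (A : Type*) [Ring A] [Algebra ℂ A] : A →ₗ[ℂ] ℂ :=
  (LinearMap.trace ℂ A) ∘ₗ (LinearMap.mul ℂ A)

open Coalgebra LinearMap

noncomputable section

namespace TCRI

variable (A : Type*) [Ring A] [HopfAlgebra ℂ A]

/-- antipode -/
def Sm : A →ₗ[ℂ] A := HopfAlgebra.antipode (R := ℂ)

/-- multiplication -/
def mu : A ⊗[ℂ] A →ₗ[ℂ] A := LinearMap.mul' ℂ A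

/-- comultiplication -/
def cm : A →ₗ[ℂ] A ⊗[ℂ] A := Coalgebra.comul

variable {A}

@[simp] lemma mu_tmul (x y : A) : mu A (x ⊗ₜ[ℂ] y) = x * y := rfl

lemma Sm_apply (x : A) : Sm A x = HopfAlgebra.antipode (R := ℂ) x := rfl

lemma cm_def : cm A = (Coalgebra.comul : A →ₗ[ℂ] A ⊗[ℂ] A) := rfl

-- Repr helper lemmas
lemma repr_smul_counit {x : A} (r : Coalgebra.Repr ℂ x (A × A)) :
    ∑ i ∈ r.index, Coalgebra.counit (R := ℂ) (r.right i) • r.left i = x := by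
  have h := Coalgebra.sum_tmul_counit_eq (R := ℂ) r
  calc ∑ i ∈ r.index, Coalgebra.counit (R := ℂ) (r.right i) • r.left i
      = TensorProduct.rid ℂ A (∑ i ∈ r.index, r.left i ⊗ₜ[ℂ] Coalgebra.counit (R := ℂ) (r.right i)) := by
        rw [map_sum]; simp
    _ = x := by rw [h]; simp

lemma repr_counit_smul {x : A} (r : Coalgebra.Repr ℂ x (A × A)) :
    ∑ i ∈ r.index, Coalgebra.counit (R := ℂ) (r.left i) • r.right i = x := by
  have h := Coalgebra.sum_counit_tmul_eq (R := ℂ) r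
  calc ∑ i ∈ r.index, Coalgebra.counit (R := ℂ) (r.left i) • r.right i
      = TensorProduct.lid ℂ A (∑ i ∈ r.index, Coalgebra.counit (R := ℂ) (r.left i) ⊗ₜ[ℂ] r.right i) := by
        rw [map_sum]; simp
    _ = x := by rw [h]; simp

lemma repr_mul_antipode {x : A} (r : Coalgebra.Repr ℂ x (A × A)) :
    ∑ i ∈ r.index, r.left i * Sm A (r.right i) = Coalgebra.counit (R := ℂ) x • 1 :=
  HopfAlgebra.sum_mul_antipode_eq_smul r

lemma repr_antipode_mul {x : A} (r : Coalgebra.Repr ℂ x (A × A)) :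
    ∑ i ∈ r.index, Sm A (r.left i) * r.right i = Coalgebra.counit (R := ℂ) x • 1 :=
  HopfAlgebra.sum_antipode_mul_eq_smul r


lemma antipode_one' : Sm A (1 : A) = 1 := by
  have h := HopfAlgebra.mul_antipode_rTensor_comul_apply (R := ℂ) (a := (1 : A))
  rw [Bialgebra.comul_one, Algebra.TensorProduct.one_def] at h
  exact HopfAlgebra.antipode_one (R := ℂ)

/-- key: `∑ S((xy)₁) (xy)₂ = ε(x)ε(y) • 1` in expanded form. -/
lemma inner2 {x y : A} (rx : Coalgebra.Repr ℂ x (A × A)) (ry : Coalgebra.Repr ℂ y (A × A)) :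
    ∑ k ∈ rx.index, ∑ l ∈ ry.index,
      Sm A (rx.left k * ry.left l) * (rx.right k * ry.right l)
      = (Coalgebra.counit (R := ℂ) x * Coalgebra.counit (R := ℂ) y) • (1 : A) := by
  have hc : Coalgebra.comul (R := ℂ) (x * y)
      = ∑ k ∈ rx.index, ∑ l ∈ ry.index,
        (rx.left k * ry.left l) ⊗ₜ[ℂ] (rx.right k * ry.right l) := by
    rw [Bialgebra.comul_mul, ← rx.eq, ← ry.eq, Finset.sum_mul_sum]
    simp [Algebra.TensorProduct.tmul_mul_tmul]
  have h := HopfAlgebra.mul_antipode_rTensor_comul_apply (R := ℂ) (a := x * y)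
  rw [hc] at h
  simp only [map_sum, LinearMap.rTensor_tmul, LinearMap.mul'_apply] at h
  simp only [Sm_apply]
  rw [h, Bialgebra.counit_mul, Algebra.algebraMap_eq_smul_one]

variable (A)

/-- `x ⊗ y ↦ S y * S x` -/
def Phi2 : A ⊗[ℂ] A →ₗ[ℂ] A :=
  mu A ∘ₗ map (Sm A) (Sm A) ∘ₗ (TensorProduct.comm ℂ A A).toLinearMap

/-- `(x₂ ⊗ x₃) ⊗ (y₂ ⊗ y₃) ↦ (x₂y₂) * (S y₃ * S x₃)` -/
def innerM : (A ⊗[ℂ] A) ⊗[ℂ] (A ⊗[ℂ] A) →ₗ[ℂ] A :=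
  mu A ∘ₗ map (mu A) (Phi2 A) ∘ₗ (tensorTensorTensorComm ℂ A A A A).toLinearMap

/-- the key six-fold contraction -/
def Mbig : (A ⊗[ℂ] (A ⊗[ℂ] A)) ⊗[ℂ] (A ⊗[ℂ] (A ⊗[ℂ] A)) →ₗ[ℂ] A :=
  mu A ∘ₗ map (Sm A ∘ₗ mu A) (innerM A)
    ∘ₗ (tensorTensorTensorComm ℂ A (A ⊗[ℂ] A) A (A ⊗[ℂ] A)).toLinearMap

variable {A}

@[simp] lemma Phi2_tmul (x y : A) : Phi2 A (x ⊗ₜ[ℂ] y) = Sm A y * Sm A x := rfl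

@[simp] lemma innerM_tmul (x₂ x₃ y₂ y₃ : A) :
    innerM A ((x₂ ⊗ₜ[ℂ] x₃) ⊗ₜ[ℂ] (y₂ ⊗ₜ[ℂ] y₃)) = (x₂ * y₂) * (Sm A y₃ * Sm A x₃) := rfl

@[simp] lemma Mbig_tmul (x₁ x₂ x₃ y₁ y₂ y₃ : A) :
    Mbig A ((x₁ ⊗ₜ[ℂ] (x₂ ⊗ₜ[ℂ] x₃)) ⊗ₜ[ℂ] (y₁ ⊗ₜ[ℂ] (y₂ ⊗ₜ[ℂ] y₃)))
      = Sm A (x₁ * y₁) * ((x₂ * y₂) * (Sm A y₃ * Sm A x₃)) := rfl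

lemma helper_r {x : A} (r : Coalgebra.Repr ℂ x (A × A)) (c : A) :
    ∑ l ∈ r.index, r.left l * (Sm A (r.right l) * c)
      = Coalgebra.counit (R := ℂ) x • c := by
  calc ∑ l ∈ r.index, r.left l * (Sm A (r.right l) * c)
      = (∑ l ∈ r.index, r.left l * Sm A (r.right l)) * c := by
        rw [Finset.sum_mul]
        exact Finset.sum_congr rfl fun l _ => (mul_assoc _ _ _).symm
    _ = Coalgebra.counit (R := ℂ) x • c := by
        rw [repr_mul_antipode r, smul_mul_assoc, one_mul]

lemma inner2' {x y : A} (rx : Coalgebra.Repr ℂ x (A × A)) (ry : Coalgebra.Repr ℂ y (A × A)) (c : A) :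
    ∑ k ∈ rx.index, ∑ l ∈ ry.index,
      Sm A (rx.left k * ry.left l) * ((rx.right k * ry.right l) * c)
      = (Coalgebra.counit (R := ℂ) x * Coalgebra.counit (R := ℂ) y) • c := by
  calc ∑ k ∈ rx.index, ∑ l ∈ ry.index,
        Sm A (rx.left k * ry.left l) * ((rx.right k * ry.right l) * c)
      = (∑ k ∈ rx.index, ∑ l ∈ ry.index,
          Sm A (rx.left k * ry.left l) * (rx.right k * ry.right l)) * c := by
        rw [Finset.sum_mul]
        refine Finset.sum_congr rfl fun k _ => ?_
        rw [Finset.sum_mul]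
        exact Finset.sum_congr rfl fun l _ => (mul_assoc _ _ _).symm
    _ = _ := by rw [inner2 rx ry, smul_mul_assoc, one_mul]

lemma eval1 (a b : A) (ra : Coalgebra.Repr ℂ a (A × A)) (rb : Coalgebra.Repr ℂ b (A × A))
    (ra2 : ∀ i, Coalgebra.Repr ℂ (ra.right i) (A × A)) (rb2 : ∀ j, Coalgebra.Repr ℂ (rb.right j) (A × A)) :
    ∑ i ∈ ra.index, ∑ k ∈ (ra2 i).index, ∑ j ∈ rb.index, ∑ l ∈ (rb2 j).index,
      Sm A (ra.left i * rb.left j) *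
        ((ra2 i).left k * ((rb2 j).left l *
          (Sm A ((rb2 j).right l) * Sm A ((ra2 i).right k))))
      = Sm A (a * b) := by
  have step1 : ∀ i ∈ ra.index, ∀ k ∈ (ra2 i).index, ∀ j ∈ rb.index,
      ∑ l ∈ (rb2 j).index,
        Sm A (ra.left i * rb.left j) *
          ((ra2 i).left k * ((rb2 j).left l *
            (Sm A ((rb2 j).right l) * Sm A ((ra2 i).right k))))
      = Coalgebra.counit (R := ℂ) (rb.right j) •
          (Sm A (ra.left i * rb.left j) * ((ra2 i).left k * Sm A ((ra2 i).right k))) := by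
    intro i _ k _ j _
    rw [← Finset.mul_sum, ← Finset.mul_sum, helper_r (rb2 j), mul_smul_comm, mul_smul_comm]
  calc _ = ∑ i ∈ ra.index, ∑ k ∈ (ra2 i).index, ∑ j ∈ rb.index,
      Coalgebra.counit (R := ℂ) (rb.right j) •
          (Sm A (ra.left i * rb.left j) * ((ra2 i).left k * Sm A ((ra2 i).right k))) := by
        refine Finset.sum_congr rfl fun i hi => Finset.sum_congr rfl fun k hk =>
          Finset.sum_congr rfl fun j hj => step1 i hi k hk j hj
    _ = ∑ i ∈ ra.index, ∑ j ∈ rb.index,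
        (Coalgebra.counit (R := ℂ) (rb.right j) * Coalgebra.counit (R := ℂ) (ra.right i)) •
          Sm A (ra.left i * rb.left j) := by
        refine Finset.sum_congr rfl fun i hi => ?_
        rw [Finset.sum_comm]
        refine Finset.sum_congr rfl fun j hj => ?_
        rw [← Finset.smul_sum, ← Finset.mul_sum, repr_mul_antipode (ra2 i),
          mul_smul_comm, mul_one, smul_smul]
    _ = ∑ i ∈ ra.index,
        Coalgebra.counit (R := ℂ) (ra.right i) • Sm A (ra.left i * b) := by
        refine Finset.sum_congr rfl fun i hi => ?_
        calc ∑ j ∈ rb.index,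
              (Coalgebra.counit (R := ℂ) (rb.right j) * Coalgebra.counit (R := ℂ) (ra.right i)) •
                Sm A (ra.left i * rb.left j)
            = Coalgebra.counit (R := ℂ) (ra.right i) •
                ∑ j ∈ rb.index, Coalgebra.counit (R := ℂ) (rb.right j) •
                  Sm A (ra.left i * rb.left j) := by
              rw [Finset.smul_sum]
              exact Finset.sum_congr rfl fun j hj => by rw [smul_smul, mul_comm]
          _ = Coalgebra.counit (R := ℂ) (ra.right i) • Sm A (ra.left i * b) := by
              congr 1
              calc ∑ j ∈ rb.index, Coalgebra.counit (R := ℂ) (rb.right j) •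
                      Sm A (ra.left i * rb.left j)
                  = Sm A (ra.left i *
                      ∑ j ∈ rb.index, Coalgebra.counit (R := ℂ) (rb.right j) • rb.left j) := by
                    rw [Finset.mul_sum, map_sum]
                    exact Finset.sum_congr rfl fun j hj => by rw [mul_smul_comm, map_smul]
                _ = Sm A (ra.left i * b) := by rw [repr_smul_counit rb]
    _ = Sm A (a * b) := by
        calc ∑ i ∈ ra.index, Coalgebra.counit (R := ℂ) (ra.right i) • Sm A (ra.left i * b)
            = Sm A ((∑ i ∈ ra.index, Coalgebra.counit (R := ℂ) (ra.right i) • ra.left i) * b) := by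
              rw [Finset.sum_mul, map_sum]
              exact Finset.sum_congr rfl fun i hi => by rw [smul_mul_assoc, map_smul]
          _ = Sm A (a * b) := by rw [repr_smul_counit ra]

lemma sum_counit_antipode {x : A} (r : Coalgebra.Repr ℂ x (A × A)) :
    ∑ j ∈ r.index, Coalgebra.counit (R := ℂ) (r.left j) • Sm A (r.right j) = Sm A x := by
  calc ∑ j ∈ r.index, Coalgebra.counit (R := ℂ) (r.left j) • Sm A (r.right j)
      = Sm A (∑ j ∈ r.index, Coalgebra.counit (R := ℂ) (r.left j) • r.right j) := by
        rw [map_sum]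
        exact Finset.sum_congr rfl fun j hj => (map_smul _ _ _).symm
    _ = Sm A x := by rw [repr_counit_smul r]

lemma eval2 (a b : A) (ra : Coalgebra.Repr ℂ a (A × A)) (rb : Coalgebra.Repr ℂ b (A × A))
    (la : ∀ i, Coalgebra.Repr ℂ (ra.left i) (A × A)) (lb : ∀ j, Coalgebra.Repr ℂ (rb.left j) (A × A)) :
    ∑ i ∈ ra.index, ∑ k ∈ (la i).index, ∑ j ∈ rb.index, ∑ l ∈ (lb j).index,
      Sm A ((la i).left k * (lb j).left l) *
        ((la i).right k * ((lb j).right l *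
          (Sm A (rb.right j) * Sm A (ra.right i))))
      = Sm A b * Sm A a := by
  calc _ = ∑ i ∈ ra.index, ∑ j ∈ rb.index,
        (Coalgebra.counit (R := ℂ) (ra.left i) * Coalgebra.counit (R := ℂ) (rb.left j)) •
          (Sm A (rb.right j) * Sm A (ra.right i)) := by
        refine Finset.sum_congr rfl fun i hi => ?_
        rw [Finset.sum_comm]
        refine Finset.sum_congr rfl fun j hj => ?_
        refine Eq.trans ?_ (inner2' (la i) (lb j) (Sm A (rb.right j) * Sm A (ra.right i)))
        exact Finset.sum_congr rfl fun k _ => Finset.sum_congr rfl fun l _ => by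
          rw [mul_assoc]
    _ = ∑ i ∈ ra.index, Coalgebra.counit (R := ℂ) (ra.left i) •
          (Sm A b * Sm A (ra.right i)) := by
        refine Finset.sum_congr rfl fun i hi => ?_
        calc ∑ j ∈ rb.index,
              (Coalgebra.counit (R := ℂ) (ra.left i) * Coalgebra.counit (R := ℂ) (rb.left j)) •
                (Sm A (rb.right j) * Sm A (ra.right i))
            = ∑ j ∈ rb.index, Coalgebra.counit (R := ℂ) (ra.left i) •
                ((Coalgebra.counit (R := ℂ) (rb.left j) • Sm A (rb.right j)) * Sm A (ra.right i)) := by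
              exact Finset.sum_congr rfl fun j hj => by rw [mul_smul, smul_mul_assoc]
          _ = Coalgebra.counit (R := ℂ) (ra.left i) •
                ((∑ j ∈ rb.index, Coalgebra.counit (R := ℂ) (rb.left j) • Sm A (rb.right j)) *
                  Sm A (ra.right i)) := by
              rw [← Finset.smul_sum, ← Finset.sum_mul]
          _ = Coalgebra.counit (R := ℂ) (ra.left i) • (Sm A b * Sm A (ra.right i)) := by
              rw [sum_counit_antipode rb]
    _ = Sm A b * Sm A a := by
        calc ∑ i ∈ ra.index, Coalgebra.counit (R := ℂ) (ra.left i) •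
                (Sm A b * Sm A (ra.right i))
            = Sm A b * ∑ i ∈ ra.index, Coalgebra.counit (R := ℂ) (ra.left i) • Sm A (ra.right i) := by
              rw [Finset.mul_sum]
              exact Finset.sum_congr rfl fun i hi => (mul_smul_comm _ _ _).symm
          _ = Sm A b * Sm A a := by rw [sum_counit_antipode ra]

lemma expandR (x : A) (rx : Coalgebra.Repr ℂ x (A × A)) (rx2 : ∀ i, Coalgebra.Repr ℂ (rx.right i) (A × A)) :
    (cm A).lTensor A (cm A x)
      = ∑ i ∈ rx.index, ∑ k ∈ (rx2 i).index,
          rx.left i ⊗ₜ[ℂ] ((rx2 i).left k ⊗ₜ[ℂ] (rx2 i).right k) := by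
  rw [cm_def, ← rx.eq, map_sum]
  refine Finset.sum_congr rfl fun i _ => ?_
  rw [lTensor_tmul, ← (rx2 i).eq, tmul_sum]

lemma expandL (x : A) (rx : Coalgebra.Repr ℂ x (A × A)) (lx : ∀ i, Coalgebra.Repr ℂ (rx.left i) (A × A)) :
    (cm A).lTensor A (cm A x)
      = ∑ i ∈ rx.index, ∑ k ∈ (lx i).index,
          (lx i).left k ⊗ₜ[ℂ] ((lx i).right k ⊗ₜ[ℂ] rx.right i) := by
  rw [cm_def, ← Coalgebra.coassoc_apply, ← rx.eq, map_sum,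
    ← LinearEquiv.coe_toLinearMap (TensorProduct.assoc ℂ A A A)]
  simp only [map_sum]
  refine Finset.sum_congr rfl fun i _ => ?_
  rw [rTensor_tmul, ← (lx i).eq, sum_tmul]
  simp only [map_sum]
  exact Finset.sum_congr rfl fun k _ => by
    rw [LinearEquiv.coe_toLinearMap, assoc_tmul]

theorem antipode_mul' (a b : A) : Sm A (a * b) = Sm A b * Sm A a := by
  classical
  set ra := ℛ ℂ a with hra
  set rb := ℛ ℂ b with hrb
  have E1 : Mbig A (((cm A).lTensor A (cm A a)) ⊗ₜ[ℂ] ((cm A).lTensor A (cm A b)))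
      = Sm A (a * b) := by
    rw [expandR a ra (fun i => ℛ ℂ (ra.right i)), expandR b rb (fun j => ℛ ℂ (rb.right j))]
    simp only [sum_tmul]
    simp only [tmul_sum]
    simp only [map_sum, Mbig_tmul, mul_assoc]
    exact eval1 a b ra rb (fun i => ℛ ℂ (ra.right i)) (fun j => ℛ ℂ (rb.right j))
  have E2 : Mbig A (((cm A).lTensor A (cm A a)) ⊗ₜ[ℂ] ((cm A).lTensor A (cm A b)))
      = Sm A b * Sm A a := by
    rw [expandL a ra (fun i => ℛ ℂ (ra.left i)), expandL b rb (fun j => ℛ ℂ (rb.left j))]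
    simp only [sum_tmul]
    simp only [tmul_sum]
    simp only [map_sum, Mbig_tmul, mul_assoc]
    exact eval2 a b ra rb (fun i => ℛ ℂ (ra.left i)) (fun j => ℛ ℂ (rb.left j))
  exact E1.symm.trans E2


/-- `∑ x₂ S(x₁) = ε(x) 1`, valid when `S ∘ S = id`. -/
lemma repr_right_mul_antipode_left (hinv : ∀ z : A, Sm A (Sm A z) = z)
    {x : A} (r : Coalgebra.Repr ℂ x (A × A)) :
    ∑ i ∈ r.index, r.right i * Sm A (r.left i) = Coalgebra.counit (R := ℂ) x • 1 := by
  have h := congrArg (Sm A) (repr_mul_antipode r)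
  rw [map_sum, map_smul, antipode_one'] at h
  calc ∑ i ∈ r.index, r.right i * Sm A (r.left i)
      = ∑ i ∈ r.index, Sm A (r.left i * Sm A (r.right i)) := by
        refine Finset.sum_congr rfl fun i _ => ?_
        rw [antipode_mul', hinv]
    _ = Coalgebra.counit (R := ℂ) x • 1 := h

variable (A)

/-- associator as a linear map -/
def asm : (A ⊗[ℂ] (A ⊗[ℂ] A)) →ₗ[ℂ] (A ⊗[ℂ] A) ⊗[ℂ] A :=
  (TensorProduct.assoc ℂ A A A).symm.toLinearMap

/-- `x ⊗ y ↦ y * x` -/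
def m2 : A ⊗[ℂ] A →ₗ[ℂ] A := mu A ∘ₗ (TensorProduct.comm ℂ A A).toLinearMap

/-- `x ⊗ y ↦ y * S x` -/
def m2S : A ⊗[ℂ] A →ₗ[ℂ] A :=
  mu A ∘ₗ (TensorProduct.comm ℂ A A).toLinearMap ∘ₗ (Sm A).rTensor A

/-- the fundamental operator `x ⊗ y ↦ ∑ y₁ x ⊗ y₂` -/
def Wr : A ⊗[ℂ] A →ₗ[ℂ] A ⊗[ℂ] A :=
  (m2 A).rTensor A ∘ₗ asm A ∘ₗ (cm A).lTensor A

/-- contraction with a functional in the first tensor slot -/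
def contr (h : A →ₗ[ℂ] ℂ) : A ⊗[ℂ] A →ₗ[ℂ] A :=
  (TensorProduct.lid ℂ A).toLinearMap ∘ₗ h.rTensor A

/-- the coregular action `z ↦ ∑ h(z₁) z₂` -/
def Dm (h : A →ₗ[ℂ] ℂ) : A →ₗ[ℂ] A := contr A h ∘ₗ cm A

variable {A}

@[simp] lemma asm_tmul (x y z : A) :
    asm A (x ⊗ₜ[ℂ] (y ⊗ₜ[ℂ] z)) = (x ⊗ₜ[ℂ] y) ⊗ₜ[ℂ] z := rfl

@[simp] lemma m2_tmul (x y : A) : m2 A (x ⊗ₜ[ℂ] y) = y * x := rfl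

@[simp] lemma m2S_tmul (x y : A) : m2S A (x ⊗ₜ[ℂ] y) = y * Sm A x := rfl

@[simp] lemma contr_tmul (h : A →ₗ[ℂ] ℂ) (x y : A) :
    contr A h (x ⊗ₜ[ℂ] y) = h x • y := rfl

lemma Dm_apply (h : A →ₗ[ℂ] ℂ) (z : A) : Dm A h z = contr A h (cm A z) := rfl

lemma Wr_tmul (x y : A) :
    Wr A (x ⊗ₜ[ℂ] y) = (m2 A).rTensor A (asm A (x ⊗ₜ[ℂ] cm A y)) := rfl

lemma Wr_tmul' (x p q : A) :
    (m2 A).rTensor A (asm A (x ⊗ₜ[ℂ] (p ⊗ₜ[ℂ] q))) = (p * x) ⊗ₜ[ℂ] q := by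
  rw [asm_tmul, rTensor_tmul, m2_tmul]

/-- C3 : `Wr ∘ (1 ⊗ mulLeft a) = mulLeft (Δ a) ∘ Wr` -/
lemma Wr_mulLeft (a : A) :
    Wr A ∘ₗ (LinearMap.mulLeft ℂ a).lTensor A = LinearMap.mulLeft ℂ (cm A a) ∘ₗ Wr A := by
  have aux : ∀ (x : A) (c t : A ⊗[ℂ] A),
      (m2 A).rTensor A (asm A (x ⊗ₜ[ℂ] (c * t)))
        = c * (m2 A).rTensor A (asm A (x ⊗ₜ[ℂ] t)) := by
    intro x c t
    induction c using TensorProduct.induction_on with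
    | zero => simp only [zero_mul, tmul_zero, map_zero]
    | add c₁ c₂ h₁ h₂ => simp only [add_mul, tmul_add, map_add, h₁, h₂]
    | tmul p q =>
      induction t using TensorProduct.induction_on with
      | zero => simp only [mul_zero, tmul_zero, map_zero]
      | add t₁ t₂ h₁ h₂ => simp only [mul_add, tmul_add, map_add, h₁, h₂]
      | tmul r s =>
        rw [Algebra.TensorProduct.tmul_mul_tmul, Wr_tmul', Wr_tmul',
          Algebra.TensorProduct.tmul_mul_tmul, mul_assoc]
  apply TensorProduct.ext'
  intro x y
  simp only [LinearMap.comp_apply, lTensor_tmul, LinearMap.mulLeft_apply]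
  rw [Wr_tmul, Wr_tmul, show cm A (a * y) = cm A a * cm A y from Bialgebra.comul_mul a y,
    aux x (cm A a) (cm A y)]

/-- C2 : `Wr (∑ S(z₁) ⊗ z₂) = 1 ⊗ z`, valid when `S ∘ S = id`. -/
lemma Wr_antipode (hinv : ∀ z : A, Sm A (Sm A z) = z) (z : A) :
    Wr A ((Sm A).rTensor A (cm A z)) = 1 ⊗ₜ[ℂ] z := by
  have haux : ∀ (x : A) (t : A ⊗[ℂ] A),
      (m2 A).rTensor A (asm A (Sm A x ⊗ₜ[ℂ] t))
        = (m2S A).rTensor A (asm A (x ⊗ₜ[ℂ] t)) := by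
    intro x t
    induction t using TensorProduct.induction_on with
    | zero => simp only [tmul_zero, map_zero]
    | add t₁ t₂ h₁ h₂ => simp only [tmul_add, map_add, h₁, h₂]
    | tmul p q =>
      rw [Wr_tmul', asm_tmul, rTensor_tmul, m2S_tmul]
  set r := ℛ ℂ z with hr
  have h1 : Wr A ((Sm A).rTensor A (cm A z))
      = ((m2S A).rTensor A ∘ₗ asm A) ((cm A).lTensor A (cm A z)) := by
    rw [cm_def, ← r.eq]
    simp only [map_sum, rTensor_tmul, lTensor_tmul, LinearMap.comp_apply]
    refine Finset.sum_congr rfl fun i _ => ?_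
    rw [Wr_tmul]
    exact haux (r.left i) (cm A (r.right i))
  rw [h1, expandL z r (fun i => ℛ ℂ (r.left i))]
  simp only [map_sum, LinearMap.comp_apply, asm_tmul, rTensor_tmul, m2S_tmul]
  have h2 : ∀ i ∈ r.index,
      ∑ k ∈ (ℛ ℂ (r.left i)).index,
        ((ℛ ℂ (r.left i)).right k * Sm A ((ℛ ℂ (r.left i)).left k)) ⊗ₜ[ℂ] r.right i
      = Coalgebra.counit (R := ℂ) (r.left i) • ((1 : A) ⊗ₜ[ℂ] r.right i) := by
    intro i _
    rw [← sum_tmul, repr_right_mul_antipode_left hinv (ℛ ℂ (r.left i)), smul_tmul']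
  rw [Finset.sum_congr rfl h2]
  calc ∑ i ∈ r.index, Coalgebra.counit (R := ℂ) (r.left i) • ((1 : A) ⊗ₜ[ℂ] r.right i)
      = (1 : A) ⊗ₜ[ℂ] ∑ i ∈ r.index, Coalgebra.counit (R := ℂ) (r.left i) • r.right i := by
        rw [tmul_sum]
        exact Finset.sum_congr rfl fun i _ => (tmul_smul _ _ _).symm
    _ = (1 : A) ⊗ₜ[ℂ] z := by rw [repr_counit_smul r]


lemma contr_mul_one_tmul (g : A →ₗ[ℂ] ℂ) (c : A ⊗[ℂ] A) (z : A) :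
    contr A g (c * ((1 : A) ⊗ₜ[ℂ] z)) = contr A g c * z := by
  induction c using TensorProduct.induction_on with
  | zero => simp only [zero_mul, map_zero]
  | add c₁ c₂ h₁ h₂ => simp only [add_mul, map_add, h₁, h₂]
  | tmul p q =>
    rw [Algebra.TensorProduct.tmul_mul_tmul, mul_one, contr_tmul, contr_tmul, smul_mul_assoc]

lemma contr_Wr_tmul (g : A →ₗ[ℂ] ℂ) (e w : A) :
    contr A g (Wr A (e ⊗ₜ[ℂ] w)) = Dm A (g ∘ₗ LinearMap.mulRight ℂ e) w := by
  rw [Wr_tmul, Dm_apply]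
  have : ∀ t : A ⊗[ℂ] A,
      contr A g ((m2 A).rTensor A (asm A (e ⊗ₜ[ℂ] t)))
        = contr A (g ∘ₗ LinearMap.mulRight ℂ e) t := by
    intro t
    induction t using TensorProduct.induction_on with
    | zero => simp only [tmul_zero, map_zero]
    | add t₁ t₂ h₁ h₂ => simp only [tmul_add, map_add, h₁, h₂]
    | tmul p q =>
      rw [Wr_tmul', contr_tmul, contr_tmul, LinearMap.comp_apply, LinearMap.mulRight_apply]
  exact this (cm A w)

lemma contr_rTensor_antipode (h : A →ₗ[ℂ] ℂ) (t : A ⊗[ℂ] A) :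
    contr A h ((Sm A).rTensor A t) = contr A (h ∘ₗ Sm A) t := by
  induction t using TensorProduct.induction_on with
  | zero => simp only [map_zero]
  | add t₁ t₂ h₁ h₂ => simp only [map_add, h₁, h₂]
  | tmul p q => rw [rTensor_tmul, contr_tmul, contr_tmul, LinearMap.comp_apply]

lemma Dm_comp (h h' : A →ₗ[ℂ] ℂ) :
    Dm A h ∘ₗ Dm A h' = Dm A (h ∘ₗ Dm A h') := by
  apply LinearMap.ext; intro z
  set Q : A ⊗[ℂ] (A ⊗[ℂ] A) →ₗ[ℂ] A := contr A h' ∘ₗ (contr A h).lTensor A with hQ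
  set r := ℛ ℂ z with hr
  have hQ1 : Q ((cm A).lTensor A (cm A z)) = Dm A h (Dm A h' z) := by
    rw [expandR z r (fun i => ℛ ℂ (r.right i))]
    simp only [map_sum, hQ, LinearMap.comp_apply, lTensor_tmul, contr_tmul]
    rw [show Dm A h' z = ∑ i ∈ r.index, h' (r.left i) • r.right i from by
      rw [Dm_apply, cm_def, ← r.eq, map_sum]; simp only [contr_tmul]]
    rw [map_sum]
    refine Finset.sum_congr rfl fun i _ => ?_
    rw [map_smul, show Dm A h (r.right i)
        = ∑ k ∈ (ℛ ℂ (r.right i)).index,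
            h ((ℛ ℂ (r.right i)).left k) • (ℛ ℂ (r.right i)).right k from by
      rw [Dm_apply, cm_def, ← (ℛ ℂ (r.right i)).eq, map_sum]; simp only [contr_tmul]]
    rw [Finset.smul_sum]
  have hQ2 : Q ((cm A).lTensor A (cm A z)) = Dm A (h ∘ₗ Dm A h') z := by
    rw [expandL z r (fun i => ℛ ℂ (r.left i))]
    simp only [map_sum, hQ, LinearMap.comp_apply, lTensor_tmul, contr_tmul]
    rw [Dm_apply, cm_def, ← r.eq, map_sum]
    simp only [contr_tmul]
    refine Finset.sum_congr rfl fun i _ => ?_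
    rw [LinearMap.comp_apply, Dm_apply, cm_def, ← (ℛ ℂ (r.left i)).eq, map_sum]
    simp only [contr_tmul, map_sum, map_smul, Finset.sum_smul, smul_eq_mul, mul_smul]
  rw [LinearMap.comp_apply, ← hQ1, hQ2]

lemma Dm_counit : Dm A (Coalgebra.counit (R := ℂ)) = (LinearMap.id : A →ₗ[ℂ] A) := by
  apply LinearMap.ext; intro z
  set r := ℛ ℂ z with hr
  rw [Dm_apply, cm_def, ← r.eq, map_sum]
  simp only [contr_tmul, LinearMap.id_apply]
  exact repr_counit_smul r

lemma Dm_add (h h' : A →ₗ[ℂ] ℂ) : Dm A (h + h') = Dm A h + Dm A h' := by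
  apply LinearMap.ext; intro z
  simp only [Dm, contr, LinearMap.comp_apply, LinearMap.add_apply, rTensor_add, map_add]

lemma Dm_zero : Dm A (0 : A →ₗ[ℂ] ℂ) = 0 := by
  apply LinearMap.ext; intro z
  simp only [Dm, contr, LinearMap.comp_apply, rTensor_zero, LinearMap.zero_apply, map_zero]

lemma Dm_smul (c : ℂ) (h : A →ₗ[ℂ] ℂ) : Dm A (c • h) = c • Dm A h := by
  apply LinearMap.ext; intro z
  simp only [Dm, contr, LinearMap.comp_apply, rTensor_smul, LinearMap.smul_apply, map_smul]

lemma Dm_sum {ι : Type*} (s : Finset ι) (h : ι → (A →ₗ[ℂ] ℂ)) :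
    Dm A (∑ i ∈ s, h i) = ∑ i ∈ s, Dm A (h i) := by
  classical
  induction s using Finset.cons_induction with
  | empty => simp only [Finset.sum_empty, Dm_zero]
  | cons a s ha ih => rw [Finset.sum_cons, Finset.sum_cons, Dm_add, ih]

lemma sum_collapse {ι : Type*} [Fintype ι] (bb : Module.Basis ι ℂ A) (g : A →ₗ[ℂ] ℂ) :
    ∑ i, (bb.coord i ∘ₗ Sm A) ∘ₗ Dm A (g ∘ₗ LinearMap.mulRight ℂ (bb i))
      = g 1 • (Coalgebra.counit (R := ℂ) : A →ₗ[ℂ] ℂ) := by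
  have hbase : ∀ u v : A, ∑ i, g (u * bb i) * bb.coord i v = g (u * v) := by
    intro u v
    calc ∑ i, g (u * bb i) * bb.coord i v
        = ∑ i, g (bb.coord i v • (u * bb i)) := by
          refine Finset.sum_congr rfl fun i _ => ?_
          rw [map_smul, smul_eq_mul, mul_comm]
      _ = g (u * ∑ i, bb.repr v i • bb i) := by
          rw [← map_sum, Finset.mul_sum]
          congr 1
          exact Finset.sum_congr rfl fun i _ => by
            rw [mul_smul_comm, Module.Basis.coord_apply]
      _ = g (u * v) := by rw [Module.Basis.sum_repr]
  apply LinearMap.ext; intro z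
  set r := ℛ ℂ z with hr
  have hDz : ∀ i, Dm A (g ∘ₗ LinearMap.mulRight ℂ (bb i)) z
      = ∑ j ∈ r.index, g (r.left j * bb i) • r.right j := by
    intro i
    rw [Dm_apply, cm_def, ← r.eq, map_sum]
    simp only [contr_tmul, LinearMap.comp_apply, LinearMap.mulRight_apply]
  calc (∑ i, (bb.coord i ∘ₗ Sm A) ∘ₗ Dm A (g ∘ₗ LinearMap.mulRight ℂ (bb i))) z
      = ∑ i, ∑ j ∈ r.index, g (r.left j * bb i) * bb.coord i (Sm A (r.right j)) := by
        rw [LinearMap.sum_apply]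
        refine Finset.sum_congr rfl fun i _ => ?_
        rw [LinearMap.comp_apply, hDz i, map_sum]
        simp only [LinearMap.comp_apply, map_smul, smul_eq_mul]
    _ = ∑ j ∈ r.index, ∑ i, g (r.left j * bb i) * bb.coord i (Sm A (r.right j)) :=
        Finset.sum_comm
    _ = ∑ j ∈ r.index, g (r.left j * Sm A (r.right j)) := by
        exact Finset.sum_congr rfl fun j _ => hbase (r.left j) (Sm A (r.right j))
    _ = g (Coalgebra.counit (R := ℂ) z • 1) := by
        rw [← map_sum, repr_mul_antipode r]
    _ = (g 1 • (Coalgebra.counit (R := ℂ) : A →ₗ[ℂ] ℂ)) z := by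
        rw [map_smul, smul_eq_mul, LinearMap.smul_apply, smul_eq_mul, mul_comm]

variable (A)

/-- partial trace over the first tensor factor -/
def ptr1 {ι : Type*} [Fintype ι] (bb : Module.Basis ι ℂ A) (F : A ⊗[ℂ] A →ₗ[ℂ] A ⊗[ℂ] A) :
    A →ₗ[ℂ] A :=
  ∑ i, contr A (bb.coord i) ∘ₗ F ∘ₗ (TensorProduct.mk ℂ A A (bb i))

variable {A}

lemma trace_ptr1 {ι : Type*} [Fintype ι] [DecidableEq ι] (bb : Module.Basis ι ℂ A)
    (F : A ⊗[ℂ] A →ₗ[ℂ] A ⊗[ℂ] A) :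
    LinearMap.trace ℂ (A ⊗[ℂ] A) F = LinearMap.trace ℂ A (ptr1 A bb F) := by
  rw [LinearMap.trace_eq_matrix_trace ℂ (bb.tensorProduct bb) F,
    LinearMap.trace_eq_matrix_trace ℂ bb (ptr1 A bb F)]
  have key : ∀ (w : A ⊗[ℂ] A) (i j : ι),
      (bb.tensorProduct bb).repr w (i, j) = bb.repr (contr A (bb.coord i) w) j := by
    intro w i j
    induction w using TensorProduct.induction_on with
    | zero => simp
    | add w₁ w₂ h₁ h₂ => simp only [map_add, Finsupp.add_apply, h₁, h₂]
    | tmul m n =>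
      rw [Module.Basis.tensorProduct_repr_tmul_apply, contr_tmul, map_smul, Module.Basis.coord_apply,
        Finsupp.smul_apply, smul_eq_mul, smul_eq_mul, mul_comm]
  rw [Matrix.trace, Matrix.trace]
  simp only [Matrix.diag, LinearMap.toMatrix_apply]
  rw [show (Finset.univ : Finset (ι × ι)) = Finset.univ ×ˢ Finset.univ from rfl]
  rw [Finset.sum_product]
  rw [Finset.sum_comm]
  refine Finset.sum_congr rfl fun j _ => ?_
  rw [show (ptr1 A bb F) (bb j) = ∑ i, contr A (bb.coord i) (F (bb i ⊗ₜ[ℂ] bb j)) from by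
    simp [ptr1, LinearMap.sum_apply]]
  rw [map_sum]
  rw [Finsupp.finset_sum_apply]
  refine Finset.sum_congr rfl fun i _ => ?_
  rw [key (F ((bb.tensorProduct bb) (i, j))) i j, Module.Basis.tensorProduct_apply']

end TCRI

end

theorem traceChar_is_right_integral
    (A : Type*) [Ring A] [HopfAlgebra ℂ A] [FiniteDimensional ℂ A]
    (hinv : ∀ a : A, antipode (R := ℂ) (antipode (R := ℂ) a) = a) (a : A) :
    (TensorProduct.rid ℂ A)
        ((LinearMap.lTensor A (traceChar A)) (Coalgebra.comul (R := ℂ) a)) =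
      traceChar A a • (1 : A) := by
  classical
  have hinv' : ∀ z : A, TCRI.Sm A (TCRI.Sm A z) = z := hinv
  haveI : Module.Finite ℂ (A ⊗[ℂ] A) := Module.Finite.tensorProduct ℂ A A
  set bb := Module.finBasis ℂ A with hbb
  rw [← sub_eq_zero]
  apply (Module.forall_dual_apply_eq_zero_iff ℂ _).mp
  intro g
  rw [map_sub, sub_eq_zero]
  -- notation
  set v : A := TCRI.contr A g (TCRI.cm A a) with hv
  set ρ : A ⊗[ℂ] A →ₗ[ℂ] A :=
    TCRI.contr A g ∘ₗ TCRI.Wr A ∘ₗ (LinearMap.mulLeft ℂ a).lTensor A with hρdef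
  set σ : A →ₗ[ℂ] A ⊗[ℂ] A := (TCRI.Sm A).rTensor A ∘ₗ TCRI.cm A with hσdef
  have hmulLeft : ∀ x : A, traceChar A x = LinearMap.trace ℂ A (LinearMap.mulLeft ℂ x) := by
    intro x
    have hx : LinearMap.mul ℂ A x = LinearMap.mulLeft ℂ x := by
      ext y; simp [LinearMap.mul_apply']
    simp [traceChar, hx]
  have step1 : g ((TensorProduct.rid ℂ A)
      ((LinearMap.lTensor A (traceChar A)) (Coalgebra.comul (R := ℂ) a)))
      = traceChar A v := by
    have hmap : ∀ t : A ⊗[ℂ] A,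
        g ((TensorProduct.rid ℂ A) ((LinearMap.lTensor A (traceChar A)) t))
          = traceChar A (TCRI.contr A g t) := by
      intro t
      induction t using TensorProduct.induction_on with
      | zero => simp
      | add t₁ t₂ h₁ h₂ => simp only [map_add, h₁, h₂]
      | tmul x y =>
        rw [LinearMap.lTensor_tmul, TensorProduct.rid_tmul, TCRI.contr_tmul,
          map_smul, map_smul, smul_eq_mul, smul_eq_mul, mul_comm]
    exact hmap _
  have step3 : LinearMap.mulLeft ℂ v = ρ ∘ₗ σ := by
    apply LinearMap.ext; intro z
    have hC3 := LinearMap.congr_fun (TCRI.Wr_mulLeft (A := A) a) (σ z)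
    simp only [LinearMap.comp_apply] at hC3
    have hσz : σ z = (TCRI.Sm A).rTensor A (TCRI.cm A z) := rfl
    calc (LinearMap.mulLeft ℂ v) z = v * z := rfl
      _ = TCRI.contr A g (TCRI.cm A a * ((1 : A) ⊗ₜ[ℂ] z)) :=
          (TCRI.contr_mul_one_tmul g _ z).symm
      _ = TCRI.contr A g (TCRI.cm A a * TCRI.Wr A (σ z)) := by
          rw [hσz, TCRI.Wr_antipode hinv' z]
      _ = TCRI.contr A g (TCRI.Wr A ((LinearMap.mulLeft ℂ a).lTensor A (σ z))) := by
          rw [hC3, LinearMap.mulLeft_apply]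
      _ = (ρ ∘ₗ σ) z := rfl
  have step4 : LinearMap.trace ℂ A (ρ ∘ₗ σ) = LinearMap.trace ℂ (A ⊗[ℂ] A) (σ ∘ₗ ρ) :=
    LinearMap.trace_comp_comm' σ ρ
  have step5 := TCRI.trace_ptr1 bb (σ ∘ₗ ρ)
  have step6 : TCRI.ptr1 A bb (σ ∘ₗ ρ) = g 1 • LinearMap.mulLeft ℂ a := by
    have hterm : ∀ i, TCRI.contr A (bb.coord i) ∘ₗ (σ ∘ₗ ρ) ∘ₗ (TensorProduct.mk ℂ A A (bb i))
        = TCRI.Dm A ((bb.coord i ∘ₗ TCRI.Sm A) ∘ₗ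
            TCRI.Dm A (g ∘ₗ LinearMap.mulRight ℂ (bb i))) ∘ₗ LinearMap.mulLeft ℂ a := by
      intro i
      apply LinearMap.ext; intro z
      have hρz : ρ (bb i ⊗ₜ[ℂ] z) = TCRI.Dm A (g ∘ₗ LinearMap.mulRight ℂ (bb i)) (a * z) := by
        show TCRI.contr A g
            (TCRI.Wr A ((LinearMap.mulLeft ℂ a).lTensor A (bb i ⊗ₜ[ℂ] z))) = _
        rw [LinearMap.lTensor_tmul, LinearMap.mulLeft_apply, TCRI.contr_Wr_tmul]
      have hσw : ∀ w : A, TCRI.contr A (bb.coord i) (σ w)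
          = TCRI.Dm A (bb.coord i ∘ₗ TCRI.Sm A) w := by
        intro w
        exact TCRI.contr_rTensor_antipode (bb.coord i) (TCRI.cm A w)
      calc (TCRI.contr A (bb.coord i) ∘ₗ (σ ∘ₗ ρ) ∘ₗ (TensorProduct.mk ℂ A A (bb i))) z
          = TCRI.contr A (bb.coord i) (σ (ρ (bb i ⊗ₜ[ℂ] z))) := rfl
        _ = TCRI.Dm A (bb.coord i ∘ₗ TCRI.Sm A)
              (TCRI.Dm A (g ∘ₗ LinearMap.mulRight ℂ (bb i)) (a * z)) := by
            rw [hρz, hσw]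
        _ = TCRI.Dm A ((bb.coord i ∘ₗ TCRI.Sm A) ∘ₗ
              TCRI.Dm A (g ∘ₗ LinearMap.mulRight ℂ (bb i))) (a * z) := by
            rw [← TCRI.Dm_comp]; rfl
        _ = _ := rfl
    calc TCRI.ptr1 A bb (σ ∘ₗ ρ)
        = ∑ i, TCRI.Dm A ((bb.coord i ∘ₗ TCRI.Sm A) ∘ₗ
            TCRI.Dm A (g ∘ₗ LinearMap.mulRight ℂ (bb i))) ∘ₗ LinearMap.mulLeft ℂ a := by
          rw [TCRI.ptr1]
          exact Finset.sum_congr rfl fun i _ => hterm i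
      _ = TCRI.Dm A (∑ i, (bb.coord i ∘ₗ TCRI.Sm A) ∘ₗ
            TCRI.Dm A (g ∘ₗ LinearMap.mulRight ℂ (bb i))) ∘ₗ LinearMap.mulLeft ℂ a := by
          rw [TCRI.Dm_sum]
          apply LinearMap.ext; intro z
          simp [LinearMap.sum_apply]
      _ = g 1 • LinearMap.mulLeft ℂ a := by
          rw [TCRI.sum_collapse bb g, TCRI.Dm_smul, TCRI.Dm_counit, LinearMap.smul_comp,
            LinearMap.id_comp]
  calc g ((TensorProduct.rid ℂ A)
        ((LinearMap.lTensor A (traceChar A)) (Coalgebra.comul (R := ℂ) a)))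
      = traceChar A v := step1
    _ = LinearMap.trace ℂ A (LinearMap.mulLeft ℂ v) := hmulLeft v
    _ = LinearMap.trace ℂ A (ρ ∘ₗ σ) := by rw [step3]
    _ = LinearMap.trace ℂ (A ⊗[ℂ] A) (σ ∘ₗ ρ) := step4
    _ = LinearMap.trace ℂ A (TCRI.ptr1 A bb (σ ∘ₗ ρ)) := step5
    _ = LinearMap.trace ℂ A (g 1 • LinearMap.mulLeft ℂ a) := by rw [step6]
    _ = g 1 * LinearMap.trace ℂ A (LinearMap.mulLeft ℂ a) := by
        rw [map_smul, smul_eq_mul]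
    _ = g (traceChar A a • 1) := by
        rw [map_smul, smul_eq_mul, hmulLeft a, mul_comm]
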